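/- Let w = (w_n)_{n≥1} be a bounded unilateral weight sequence and B_w the unilateral weighted backward shift on X = ℓ^p(ℤ₊) (1 ≤ p < ∞) or c₀(ℤ₊). If B_w satisfies property P_{BD̄}, then for every r ∈ ℕ the direct sum B_w ⊕ B_w² ⊕ ⋯ ⊕ B_w^r is a 𝒟*-operator on X^r. -/

import Mathlib

open Filter Topology
open scoped ENNReal

noncomputable def blockCount (A : Set ℕ) (k s : ℕ) : ℕ :=
  Nat.card (A ∩ Set.Icc (k + 1) (k + s) : Set ℕ)

/-- upper Banach density -/
noncomputable def upperBanachDensity (A : Set ℕ) : ℝ :=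
  Filter.limsup (fun s : ℕ =>
    (Filter.limsup (fun k : ℕ => (blockCount A k s : ℝ)) Filter.atTop) / s) Filter.atTop

/-- lower Banach density -/
noncomputable def lowerBanachDensity (A : Set ℕ) : ℝ :=
  Filter.liminf (fun s : ℕ =>
    (Filter.liminf (fun k : ℕ => (blockCount A k s : ℝ)) Filter.atTop) / s) Filter.atTop

/-- the family `BD̄` of sets of positive upper Banach density -/
def upperBD (A : Set ℕ) : Prop := 0 < upperBanachDensity A

/-- the family `BD₁` of sets of lower Banach density one -/
def BDone (A : Set ℕ) : Prop := lowerBanachDensity A = 1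

/-- essential idempotent ultrafilter -/
def IsEssentialIdempotent (p : Ultrafilter ℕ) : Prop :=
  (∀ A : Set ℕ, A ∈ p ↔ {n : ℕ | {m : ℕ | n + m ∈ A} ∈ p} ∈ p) ∧
    ∀ A ∈ p, 0 < upperBanachDensity A

/-- membership in `𝒟*`, the intersection of all essential idempotents -/
def InDstar (A : Set ℕ) : Prop :=
  ∀ p : Ultrafilter ℕ, IsEssentialIdempotent p → A ∈ p

/-- limit of a real sequence along a family of subsets of ℕ -/
def FamilyLim (F : Set ℕ → Prop) (x : ℕ → ℝ) (y : ℝ) : Prop :=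
  ∀ V : Set ℝ, IsOpen V → y ∈ V → F {n | x n ∈ V}

/-- property `P_𝓕` for a sequence of maps -/
def SatisfiesP {X : Type*} [TopologicalSpace X] (T : ℕ → X → X) (F : Set ℕ → Prop) : Prop :=
  ∀ U : Set X, IsOpen U → U.Nonempty → ∃ x : X, F {n | T n x ∈ U}

/-- topological 𝒟-recurrence with respect to a sequence of scalars -/
def TopDRecurrentWrt {X : Type*} [NormedAddCommGroup X] [NormedSpace ℂ X]
    (T : X →L[ℂ] X) (l : ℕ → ℂ) : Prop :=
  ∃ p : Ultrafilter ℕ, IsEssentialIdempotent p ∧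
    ∀ U : Set X, IsOpen U → U.Nonempty → ∃ x : X, ∀ r : ℕ,
      {k : ℕ | 0 < upperBanachDensity
        {a : ℕ | ∀ j ≤ r, (T ^ (j * k)) (l a • (T ^ a) x) ∈ U}} ∈ p

/-- topological 𝒟-recurrence -/
def TopDRecurrent {X : Type*} [NormedAddCommGroup X] [NormedSpace ℂ X]
    (T : X →L[ℂ] X) : Prop :=
  TopDRecurrentWrt T fun _ => 1

/-- reiterative hypercyclicity for a sequence of maps -/
def ReiterativelyHypercyclicSeq {X : Type*} [TopologicalSpace X] (T : ℕ → X → X) : Prop :=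
  ∃ x : X, ∀ U : Set X, IsOpen U → U.Nonempty → 0 < upperBanachDensity {n | T n x ∈ U}

/-- 𝒟-reiterative hypercyclicity with respect to a sequence of scalars -/
def DReiterativelyHypercyclicWrt {X : Type*} [NormedAddCommGroup X] [NormedSpace ℂ X]
    (T : X →L[ℂ] X) (l : ℕ → ℂ) : Prop :=
  ∃ p : Ultrafilter ℕ, IsEssentialIdempotent p ∧ ∃ x : X,
    ∀ U : Set X, IsOpen U → U.Nonempty → ∀ r : ℕ,
      {k : ℕ | 0 < upperBanachDensity
        {a : ℕ | ∀ j ≤ r, (T ^ (j * k)) (l a • (T ^ a) x) ∈ U}} ∈ p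

/-- hypercyclic operator -/
def Hypercyclic {X : Type*} [NormedAddCommGroup X] [NormedSpace ℂ X] (T : X →L[ℂ] X) : Prop :=
  ∃ x : X, Dense (Set.range fun n : ℕ => (T ^ n) x)

/-- topological multiple recurrence -/
def TopMultiplyRecurrent {X : Type*} [NormedAddCommGroup X] [NormedSpace ℂ X]
    (T : X →L[ℂ] X) : Prop :=
  ∀ U : Set X, IsOpen U → U.Nonempty → ∀ r : ℕ, ∃ k : ℕ, 0 < k ∧
    ∃ x : X, ∀ j ≤ r, (T ^ (j * k)) x ∈ U

/-- `𝓕`-operator -/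
def FOperator {X : Type*} [NormedAddCommGroup X] [NormedSpace ℂ X]
    (F : Set ℕ → Prop) (T : X →L[ℂ] X) : Prop :=
  ∀ U V : Set X, IsOpen U → IsOpen V → U.Nonempty → V.Nonempty →
    F {n : ℕ | ∃ x ∈ U, (T ^ n) x ∈ V}

/-- mixing operator -/
def MixingOp {X : Type*} [NormedAddCommGroup X] [NormedSpace ℂ X]
    (T : X →L[ℂ] X) : Prop :=
  ∀ U V : Set X, IsOpen U → IsOpen V → U.Nonempty → V.Nonempty →
    {n : ℕ | ∃ x ∈ U, (T ^ n) x ∈ V} ∈ Filter.cofinite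

/-- recurrent operator -/
def RecurrentOp {X : Type*} [NormedAddCommGroup X] [NormedSpace ℂ X]
    (T : X →L[ℂ] X) : Prop :=
  ∀ U : Set X, IsOpen U → U.Nonempty →
    ∃ n : ℕ, 0 < n ∧ (U ∩ (fun x => (T ^ n) x) ⁻¹' U).Nonempty

/-- syndetic set -/
def Syndetic (A : Set ℕ) : Prop :=
  ∃ k : ℕ, 0 < k ∧ ∀ n : ℕ, ∃ i : ℕ, 1 ≤ i ∧ i ≤ k ∧ n + i ∈ A

/-- upper (asymptotic) density -/
noncomputable def upperDensity (A : Set ℕ) : ℝ :=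
  Filter.limsup (fun n : ℕ => (Nat.card (A ∩ Set.Icc 1 n : Set ℕ) : ℝ) / n) Filter.atTop

/-- bounded weight -/
def BddWeight {ι : Type*} (w : ι → ℂ) : Prop := ∃ C : ℝ, ∀ i, ‖w i‖ ≤ C

/-- unilateral weighted backward shift relative to a basis `e` -/
def IsUnilateralWeightedShift {X : Type*} [NormedAddCommGroup X] [NormedSpace ℂ X]
    (e : ℕ → X) (w : ℕ → ℂ) (B : X →L[ℂ] X) : Prop :=
  B (e 0) = 0 ∧ ∀ n : ℕ, B (e (n + 1)) = w (n + 1) • e n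

/-- bilateral weighted backward shift relative to a basis `e` -/
def IsBilateralWeightedShift {X : Type*} [NormedAddCommGroup X] [NormedSpace ℂ X]
    (e : ℤ → X) (w : ℤ → ℂ) (B : X →L[ℂ] X) : Prop :=
  ∀ k : ℤ, B (e k) = w k • e (k - 1)

/-- `B ⊕ B² ⊕ ⋯ ⊕ B^r` acting on `X^r` -/
noncomputable def directSumPow {X : Type*} [NormedAddCommGroup X] [NormedSpace ℂ X]
    (T : X →L[ℂ] X) (r : ℕ) : (Fin r → X) →L[ℂ] (Fin r → X) :=
  ContinuousLinearMap.pi fun i => (T ^ ((i : ℕ) + 1)).comp (ContinuousLinearMap.proj i)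

/-- canonical basis vector of `c₀` over a discrete index type -/
noncomputable def c0Single {α : Type*} [TopologicalSpace α] [DiscreteTopology α]
    [DecidableEq α] (k : α) : ZeroAtInftyContinuousMap α ℂ where
  toFun := fun m => if m = k then 1 else 0
  continuous_toFun := continuous_of_discreteTopology
  zero_at_infty' := by
    rw [Filter.cocompact_eq_cofinite]
    refine Filter.Tendsto.congr' ?_ tendsto_const_nhds
    filter_upwards [Filter.eventually_cofinite_ne k] with m hm
    simp [hm]

/-- the set `A_{M;j}` for a bilateral weight -/
def AMjZ (w : ℤ → ℂ) (M : ℝ) (j : ℤ) : Set ℕ :=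
  {n : ℕ | M < ∏ i ∈ Finset.Icc (j + 1) (j + (n : ℤ)), ‖w i‖}

/-- the set `Ā_{M;j}` for a bilateral weight -/
def AbarMjZ (w : ℤ → ℂ) (M : ℝ) (j : ℤ) : Set ℕ :=
  {n : ℕ | ∏ i ∈ Finset.Icc (j - (n : ℤ) + 1) j, ‖w i‖ < 1 / M}

/-- the set `A_{M;j}` for a unilateral weight -/
def AMjN (w : ℕ → ℂ) (M : ℝ) (j : ℕ) : Set ℕ :=
  {n : ℕ | M < ∏ i ∈ Finset.Icc (j + 1) (j + n), ‖w i‖}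

/-! ### Auxiliary lemmas -/

open Classical in
lemma blockCount_eq_card (A : Set ℕ) (k s : ℕ) :
    blockCount A k s = ((Finset.Icc (k + 1) (k + s)).filter (· ∈ A)).card := by
  have h : (A ∩ Set.Icc (k + 1) (k + s) : Set ℕ)
      = ((Finset.Icc (k + 1) (k + s)).filter (· ∈ A) : Finset ℕ) := by
    ext n
    simp only [Set.mem_inter_iff, Set.mem_Icc, Finset.coe_filter, Finset.mem_Icc, Set.mem_setOf_eq]
    tauto
  rw [blockCount, h, Nat.card_coe_set_eq, Set.ncard_coe_finset]

lemma blockCount_le (A : Set ℕ) (k s : ℕ) : blockCount A k s ≤ s := by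
  classical
  rw [blockCount_eq_card]
  calc ((Finset.Icc (k + 1) (k + s)).filter (· ∈ A)).card
      ≤ (Finset.Icc (k + 1) (k + s)).card := Finset.card_filter_le _ _
    _ = s := by rw [Nat.card_Icc]; omega

lemma blockCount_finite_eventually_zero {A : Set ℕ} (h : A.Finite) (s : ℕ) :
    ∀ᶠ k in Filter.atTop, (blockCount A k s : ℝ) = 0 := by
  classical
  obtain ⟨N, hN⟩ : ∃ N, ∀ a ∈ A, a ≤ N := by
    rcases h.bddAbove with ⟨N, hN⟩
    exact ⟨N, fun a ha => hN ha⟩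
  filter_upwards [Filter.eventually_ge_atTop N] with k hk
  have : blockCount A k s = 0 := by
    rw [blockCount_eq_card, Finset.card_eq_zero]
    ext n
    simp only [Finset.mem_filter, Finset.mem_Icc, Finset.notMem_empty, iff_false, not_and]
    intro h1 hn
    have := hN n hn
    omega
  simp [this]

lemma upperBanachDensity_finite {A : Set ℕ} (h : A.Finite) : upperBanachDensity A = 0 := by
  have h1 : ∀ s : ℕ,
      Filter.limsup (fun k : ℕ => (blockCount A k s : ℝ)) Filter.atTop = 0 := by
    intro s
    rw [Filter.limsup_congr (blockCount_finite_eventually_zero h s)]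
    exact Filter.limsup_const 0
  have h2 : (fun s : ℕ =>
      (Filter.limsup (fun k : ℕ => (blockCount A k s : ℝ)) Filter.atTop) / s)
      = fun _ : ℕ => (0 : ℝ) := by
    funext s; rw [h1 s, zero_div]
  rw [upperBanachDensity, h2]
  exact Filter.limsup_const 0

/-- every member of an essential idempotent is infinite, hence cofinite sets belong to it -/
lemma tail_mem_of_essential {q : Ultrafilter ℕ} (hq : IsEssentialIdempotent q) (N : ℕ) :
    {n : ℕ | N ≤ n} ∈ q := by
  by_contra h
  have h2 : {n : ℕ | N ≤ n}ᶜ ∈ q := (Ultrafilter.compl_mem_iff_notMem).2 h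
  have h3 : ({n : ℕ | N ≤ n}ᶜ : Set ℕ).Finite := by
    apply Set.Finite.subset (Set.finite_Iio N)
    intro n hn
    simpa [Set.mem_Iio, not_le] using hn
  have := hq.2 _ h2
  rw [upperBanachDensity_finite h3] at this
  exact lt_irrefl 0 this
lemma exists_window (D : Set ℕ) (hD : 0 < upperBanachDensity D) (S0 : ℕ) :
    ∃ s k : ℕ, S0 ≤ s ∧ 1 ≤ s ∧ S0 ≤ k ∧
      (upperBanachDensity D / 2) * s < (blockCount D k s : ℝ) := by
  set δ := upperBanachDensity D with hδdef
  have hbd : ∀ s : ℕ, Filter.IsBoundedUnder (· ≤ ·) Filter.atTop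
      (fun k : ℕ => (blockCount D k s : ℝ)) := by
    intro s
    apply Filter.isBoundedUnder_of
    refine ⟨(s : ℝ), fun k => ?_⟩
    exact_mod_cast blockCount_le D k s
  have hg0 : ∀ s : ℕ, 0 ≤ (Filter.limsup (fun k : ℕ => (blockCount D k s : ℝ))
      Filter.atTop) / s := by
    intro s
    apply div_nonneg _ (Nat.cast_nonneg s)
    exact Filter.le_limsup_of_frequently_le
      (Filter.Frequently.of_forall fun k => Nat.cast_nonneg _) (hbd s)
  have hco : Filter.IsCoboundedUnder (· ≤ ·) Filter.atTop
      (fun s : ℕ => (Filter.limsup (fun k : ℕ => (blockCount D k s : ℝ))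
        Filter.atTop) / s) :=
    Filter.isCoboundedUnder_le_of_le _ hg0
  have hfreq : ∃ᶠ s in Filter.atTop, δ / 2 <
      (Filter.limsup (fun k : ℕ => (blockCount D k s : ℝ)) Filter.atTop) / s :=
    Filter.frequently_lt_of_lt_limsup hco (by
      rw [hδdef, upperBanachDensity]; exact half_lt_self hD)
  obtain ⟨s, hs1, hs2⟩ :=
    (hfreq.and_eventually (Filter.eventually_ge_atTop (max S0 1))).exists
  have hs0 : (0 : ℝ) < s := by
    have : 1 ≤ s := le_trans (le_max_right _ _) hs2
    exact_mod_cast this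
  have hL : δ / 2 * s < Filter.limsup (fun k : ℕ => (blockCount D k s : ℝ))
      Filter.atTop := (lt_div_iff₀ hs0).mp hs1
  have hco2 : Filter.IsCoboundedUnder (· ≤ ·) Filter.atTop
      (fun k : ℕ => (blockCount D k s : ℝ)) :=
    Filter.isCoboundedUnder_le_of_le _ (fun k => Nat.cast_nonneg _)
  have hfreq2 : ∃ᶠ k in Filter.atTop, δ / 2 * s < (blockCount D k s : ℝ) :=
    Filter.frequently_lt_of_lt_limsup hco2 hL
  obtain ⟨k, hk1, hk2⟩ :=
    (hfreq2.and_eventually (Filter.eventually_ge_atTop S0)).exists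
  exact ⟨s, k, le_trans (le_max_left _ _) hs2, le_trans (le_max_right _ _) hs2, hk2, hk1⟩

open Classical in
lemma pigeonhole_translates (D : Set ℕ) (hD : 0 < upperBanachDensity D)
    (L : ℕ) (hL : 4 / upperBanachDensity D < (L : ℝ)) (c : ℕ → ℕ)
    (hc : ∀ i i', i < i' → i' < L → c i < c i') :
    ∃ i i' m, i < i' ∧ i' < L ∧ (m + c i) ∈ D ∧ (m + c i') ∈ D := by
  set δ := upperBanachDensity D with hδdef
  have hδpos : 0 < δ := hD
  have hLpos : 0 < L := by
    by_contra h
    push_neg at h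
    interval_cases L
    · simp only [Nat.cast_zero] at hL
      have : (0:ℝ) < 4 / δ := by positivity
      linarith
  have hcS : ∀ i, i < L → c i ≤ c (L - 1) := by
    intro i hi
    rcases lt_or_eq_of_le (Nat.le_sub_one_of_lt hi) with h | h
    · exact le_of_lt (hc i (L-1) h (by omega))
    · rw [h]
  set S := c (L - 1) with hSdef
  obtain ⟨s, k, hsS, hs1, hkS, hcount⟩ := exists_window D hD S
  set F := (Finset.Icc (k + 1) (k + s)).filter (· ∈ D) with hFdef
  have hFcard : (F.card : ℝ) = (blockCount D k s : ℝ) := by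
    rw [blockCount_eq_card]
  have hmemF : ∀ x ∈ F, k + 1 ≤ x ∧ x ≤ k + s ∧ x ∈ D := by
    intro x hx
    simp only [hFdef, Finset.mem_filter, Finset.mem_Icc] at hx
    tauto
  set T : ℕ → Finset ℕ := fun i => F.image (fun x => x - c i) with hTdef
  have hTcard : ∀ i, i < L → (T i).card = F.card := by
    intro i hi
    apply Finset.card_image_of_injOn
    intro x hx y hy hxy
    have hxy' : x - c i = y - c i := hxy
    have hx' := hmemF x hx
    have hy' := hmemF y hy
    have hci : c i ≤ S := hcS i hi
    omega
  have hTsub : ∀ i, i < L → T i ⊆ Finset.Icc (k + 1 - S) (k + s) := by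
    intro i hi m hm
    simp only [hTdef, Finset.mem_image] at hm
    obtain ⟨x, hx, rfl⟩ := hm
    have hx' := hmemF x hx
    have hci : c i ≤ S := hcS i hi
    simp only [Finset.mem_Icc]
    omega
  have hTmem : ∀ i, i < L → ∀ m ∈ T i, (m + c i) ∈ D := by
    intro i hi m hm
    simp only [hTdef, Finset.mem_image] at hm
    obtain ⟨x, hx, rfl⟩ := hm
    have hx' := hmemF x hx
    have hci : c i ≤ S := hcS i hi
    have : x - c i + c i = x := by omega
    rw [this]
    exact hx'.2.2
  by_contra hcon
  push_neg at hcon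
  have hdisj : ∀ i ∈ Finset.range L, ∀ i' ∈ Finset.range L, i ≠ i' →
      Disjoint (T i) (T i') := by
    intro i hi i' hi' hne
    simp only [Finset.mem_range] at hi hi'
    rw [Finset.disjoint_left]
    intro m hmi hmi'
    rcases hne.lt_or_gt with h | h
    · exact absurd (hTmem i' hi' m hmi') (hcon i i' m h hi' (hTmem i hi m hmi))
    · exact absurd (hTmem i hi m hmi) (hcon i' i m h hi (hTmem i' hi' m hmi'))
  have hbicard : ((Finset.range L).biUnion T).card = L * F.card := by
    rw [Finset.card_biUnion hdisj]
    rw [Finset.sum_congr rfl (fun i hi => hTcard i (Finset.mem_range.mp hi))]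
    simp [Finset.sum_const, Finset.card_range, mul_comm]
  have hbisub : (Finset.range L).biUnion T ⊆ Finset.Icc (k + 1 - S) (k + s) := by
    intro m hm
    rw [Finset.mem_biUnion] at hm
    obtain ⟨i, hi, hmi⟩ := hm
    exact hTsub i (Finset.mem_range.mp hi) hmi
  have hle : L * F.card ≤ s + S := by
    have h1 := Finset.card_le_card hbisub
    rw [hbicard, Nat.card_Icc] at h1
    omega
  -- real contradiction
  have h2s : (2 : ℝ) * s < (L : ℝ) * F.card := by
    have h1 : δ / 2 * s < (F.card : ℝ) := by rw [hFcard]; exact hcount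
    have h2 : (4 / δ) * (δ / 2 * s) < (4 / δ) * (F.card : ℝ) :=
      mul_lt_mul_of_pos_left h1 (by positivity)
    have h3 : (4 / δ) * (δ / 2 * s) = 2 * s := by field_simp; ring
    have h4 : (4 / δ) * (F.card : ℝ) ≤ (L : ℝ) * F.card :=
      mul_le_mul_of_nonneg_right (le_of_lt hL) (Nat.cast_nonneg _)
    linarith
  have h5 : ((s + S : ℕ) : ℝ) < (L : ℝ) * F.card := by
    push_cast
    have : (S : ℝ) ≤ s := by exact_mod_cast hsS
    linarith
  have h6 : ((L * F.card : ℕ) : ℝ) ≤ ((s + S : ℕ) : ℝ) := by exact_mod_cast hle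
  rw [Nat.cast_mul] at h6
  linarith
section Galvin

variable (q : Ultrafilter ℕ)

/-- the Galvin star of a set -/
def galvinStar (G : Set ℕ) : Set ℕ := G ∩ {n : ℕ | {m : ℕ | n + m ∈ G} ∈ q}

lemma galvinStar_subset (G : Set ℕ) : galvinStar q G ⊆ G := Set.inter_subset_left

variable {q}

lemma galvinStar_mem
    (hq1 : ∀ A : Set ℕ, A ∈ q ↔ {n : ℕ | {m : ℕ | n + m ∈ A} ∈ q} ∈ q)
    {G : Set ℕ} (hG : G ∈ q) : galvinStar q G ∈ q := by
  have h1 : {n : ℕ | {m : ℕ | n + m ∈ G} ∈ q} ∈ q := (hq1 G).mp hG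
  exact Filter.inter_mem hG h1

lemma galvinStar_shift
    (hq1 : ∀ A : Set ℕ, A ∈ q ↔ {n : ℕ | {m : ℕ | n + m ∈ A} ∈ q} ∈ q)
    {G : Set ℕ} {n : ℕ} (hn : n ∈ galvinStar q G) :
    {m : ℕ | n + m ∈ galvinStar q G} ∈ q := by
  obtain ⟨hnG, hH⟩ := hn
  have hH' : {m : ℕ | n + m ∈ G} ∈ q := hH
  have h2 : {m : ℕ | {k : ℕ | m + k ∈ {m' : ℕ | n + m' ∈ G}} ∈ q} ∈ q :=
    (hq1 _).mp hH'
  have h3 : {m : ℕ | {k : ℕ | m + k ∈ {m' : ℕ | n + m' ∈ G}} ∈ q}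
      = {m : ℕ | {k : ℕ | (n + m) + k ∈ G} ∈ q} := by
    ext m
    simp only [Set.mem_setOf_eq, add_assoc]
  rw [h3] at h2
  have h4 : {m : ℕ | n + m ∈ galvinStar q G}
      = {m : ℕ | n + m ∈ G} ∩ {m : ℕ | {k : ℕ | (n + m) + k ∈ G} ∈ q} := by
    ext m
    simp only [galvinStar, Set.mem_inter_iff, Set.mem_setOf_eq]
  rw [h4]
  exact Filter.inter_mem hH' h2

lemma galvin_chain
    (hq1 : ∀ A : Set ℕ, A ∈ q ↔ {n : ℕ | {m : ℕ | n + m ∈ A} ∈ q} ∈ q)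
    (hone : {n : ℕ | 1 ≤ n} ∈ q)
    {G : Set ℕ} (hG : G ∈ q) (L : ℕ) :
    ∃ σ : ℕ → ℕ, ∀ i i', i < i' → i' ≤ L → σ i < σ i' ∧ σ i' - σ i ∈ G := by
  suffices h : ∃ σ : ℕ → ℕ, ∀ i i', i < i' → i' ≤ L →
      σ i < σ i' ∧ σ i' - σ i ∈ galvinStar q G by
    obtain ⟨σ, hσ⟩ := h
    exact ⟨σ, fun i i' h1 h2 =>
      ⟨(hσ i i' h1 h2).1, galvinStar_subset q G (hσ i i' h1 h2).2⟩⟩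
  induction L with
  | zero => exact ⟨fun _ => 0, fun i i' h1 h2 => by omega⟩
  | succ L ih =>
    obtain ⟨σ, hσ⟩ := ih
    have hstep : ∀ i, i ∈ Finset.range (L + 1) →
        {m : ℕ | (σ L - σ i) + m ∈ galvinStar q G} ∈ q := by
      intro i hi
      rw [Finset.mem_range] at hi
      rcases eq_or_lt_of_le (Nat.lt_succ_iff.mp hi) with h | h
      · subst h
        have : {m : ℕ | (σ i - σ i) + m ∈ galvinStar q G} = galvinStar q G := by
          ext m; simp [Nat.sub_self]
        rw [this]
        exact galvinStar_mem hq1 hG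
      · exact galvinStar_shift hq1 (hσ i L h le_rfl).2
    have hT : ({n : ℕ | 1 ≤ n} ∩ galvinStar q G ∩
        ⋂ i ∈ Finset.range (L + 1), {m : ℕ | (σ L - σ i) + m ∈ galvinStar q G}) ∈ q := by
      refine Filter.inter_mem (Filter.inter_mem hone (galvinStar_mem hq1 hG)) ?_
      exact (Filter.biInter_finset_mem _).mpr hstep
    obtain ⟨m₀, hm₀⟩ := Ultrafilter.nonempty_of_mem hT
    obtain ⟨⟨hm1, hm2⟩, hm3⟩ := hm₀
    have hm1' : 1 ≤ m₀ := hm1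
    refine ⟨fun t => if t ≤ L then σ t else σ L + m₀, fun i i' h1 h2 => ?_⟩
    by_cases hcase : i' ≤ L
    · have hii : i ≤ L := by omega
      have e1 : (fun t => if t ≤ L then σ t else σ L + m₀) i = σ i := by simp [hii]
      have e2 : (fun t => if t ≤ L then σ t else σ L + m₀) i' = σ i' := by simp [hcase]
      rw [e1, e2]
      exact hσ i i' h1 hcase
    · have hiL : i ≤ L := by omega
      have e1 : (fun t => if t ≤ L then σ t else σ L + m₀) i = σ i := by simp [hiL]
      have e2 : (fun t => if t ≤ L then σ t else σ L + m₀) i' = σ L + m₀ := by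
        simp [hcase]
      rw [e1, e2]
      have hmem : (σ L - σ i) + m₀ ∈ galvinStar q G :=
        Set.mem_iInter₂.mp hm3 i (Finset.mem_range.mpr (by omega))
      have hσiL : σ i ≤ σ L := by
        rcases eq_or_lt_of_le hiL with h' | h'
        · rw [h']
        · exact le_of_lt (hσ i L h' le_rfl).1
      constructor
      · omega
      · have heq : σ L + m₀ - σ i = (σ L - σ i) + m₀ := by omega
        rw [heq]
        exact hmem
end Galvin

section Abstract

variable {X : Type*} [NormedAddCommGroup X] [NormedSpace ℂ X]
variable {e : ℕ → X} {φ : ℕ → X →L[ℂ] ℂ} {w : ℕ → ℂ} {B : X →L[ℂ] X}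

lemma pow_apply_basis (hBs : ∀ n, B (e (n + 1)) = w (n + 1) • e n) :
    ∀ n d, (B ^ n) (e (d + n)) = (∏ l ∈ Finset.Ioc d (d + n), w l) • e d := by
  intro n
  induction n with
  | zero =>
    intro d
    simp
  | succ n ih =>
    intro d
    show (B ^ (n + 1)) (e (d + n + 1)) = (∏ l ∈ Finset.Ioc d (d + n + 1), w l) • e d
    have h1 : (B ^ (n + 1)) (e (d + n + 1)) = (B ^ n) (B (e (d + n + 1))) := by
      rw [pow_succ, ContinuousLinearMap.mul_apply]
    rw [h1, hBs (d + n), map_smul, ih d, smul_smul]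
    rw [Finset.prod_Ioc_succ_top (by omega : d ≤ d + n)]
    ring_nf

lemma pow_apply_basis_lt (hB0 : B (e 0) = 0)
    (hBs : ∀ n, B (e (n + 1)) = w (n + 1) • e n) :
    ∀ n k, k < n → (B ^ n) (e k) = 0 := by
  intro n
  induction n with
  | zero => omega
  | succ n ih =>
    intro k hk
    have h1 : (B ^ (n + 1)) (e k) = (B ^ n) (B (e k)) := by
      rw [pow_succ, ContinuousLinearMap.mul_apply]
    match k with
    | 0 => rw [h1, hB0, map_zero]
    | k' + 1 =>
      rw [h1, hBs k', map_smul, ih k' (by omega), smul_zero]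

lemma phi_pow (hφe : ∀ d k : ℕ, φ d (e k) = if k = d then 1 else 0)
    (hde : Dense ((Submodule.span ℂ (Set.range e) : Submodule ℂ X) : Set X))
    (hB0 : B (e 0) = 0) (hBs : ∀ n, B (e (n + 1)) = w (n + 1) • e n)
    (n j : ℕ) (x : X) :
    φ j ((B ^ n) x) = (∏ l ∈ Finset.Ioc j (j + n), w l) * φ (j + n) x := by
  have key : (φ j).comp (B ^ n) = (∏ l ∈ Finset.Ioc j (j + n), w l) • φ (j + n) := by
    apply ContinuousLinearMap.ext_on hde
    rintro _ ⟨k, rfl⟩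
    simp only [ContinuousLinearMap.comp_apply, ContinuousLinearMap.smul_apply,
      smul_eq_mul]
    by_cases hk : k < n
    · rw [pow_apply_basis_lt hB0 hBs n k hk, map_zero, hφe]
      rw [if_neg (by omega)]
      ring
    · push_neg at hk
      obtain ⟨d, rfl⟩ : ∃ d, k = d + n := ⟨k - n, by omega⟩
      rw [pow_apply_basis hBs n d, map_smul, smul_eq_mul, hφe, hφe]
      by_cases hd : d = j
      · subst hd
        rw [if_pos rfl, if_pos rfl]
      · rw [if_neg hd, if_neg (by omega)]
        ring
  have := ContinuousLinearMap.ext_iff.mp key x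
  simpa using this
lemma good_D (hφe : ∀ d k : ℕ, φ d (e k) = if k = d then 1 else 0)
    (hφn : ∀ (d : ℕ) (z : X), ‖φ d z‖ ≤ ‖z‖)
    (hde : Dense ((Submodule.span ℂ (Set.range e) : Submodule ℂ X) : Set X))
    (hB0 : B (e 0) = 0) (hBs : ∀ n, B (e (n + 1)) = w (n + 1) • e n)
    (hP : SatisfiesP (fun n (x : X) => (B ^ n) x) upperBD)
    (M : ℝ) (hM : 0 < M) (j : ℕ) :
    ∃ D : Set ℕ, 0 < upperBanachDensity D ∧
      ∀ a a', a ∈ D → a' ∈ D → a < a' →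
        M < ∏ l ∈ Finset.Ioc j (j + (a' - a)), ‖w l‖ := by
  set ε : ℝ := 1 / (M + 2) with hεdef
  have hε : 0 < ε := by positivity
  obtain ⟨x, hx⟩ := hP (Metric.ball (e j) ε) Metric.isOpen_ball
    (Metric.nonempty_ball.mpr hε)
  refine ⟨{n : ℕ | (B ^ n) x ∈ Metric.ball (e j) ε}, hx, ?_⟩
  intro a a' ha ha' hlt
  set s := a' - a with hsdef
  have hs1 : 1 ≤ s := by omega
  have hsum : j + s + a = j + a' := by omega
  have hnorm : ∀ b : ℕ, b ∈ {n : ℕ | (B ^ n) x ∈ Metric.ball (e j) ε} →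
      ‖(B ^ b) x - e j‖ < ε := by
    intro b hb
    rw [Set.mem_setOf_eq, Metric.mem_ball, dist_eq_norm] at hb
    exact hb
  -- key coordinate bounds
  have key1 : 1 - ε ≤ ‖φ j ((B ^ a') x)‖ := by
    have h1 : ‖φ j ((B ^ a') x) - 1‖ < ε := by
      have h2 : φ j ((B ^ a') x) - 1 = φ j ((B ^ a') x - e j) := by
        rw [map_sub, hφe j j, if_pos rfl]
      rw [h2]
      exact lt_of_le_of_lt (hφn j _) (hnorm a' ha')
    have h3 := norm_sub_norm_le (1 : ℂ) (φ j ((B ^ a') x))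
    rw [norm_one, norm_sub_rev] at h3
    linarith
  have key2 : ‖φ (j + s) ((B ^ a) x)‖ < ε := by
    have h2 : φ (j + s) ((B ^ a) x) = φ (j + s) ((B ^ a) x - e j) := by
      rw [map_sub, hφe (j + s) j, if_neg (by omega)]
      ring
    rw [h2]
    exact lt_of_le_of_lt (hφn (j + s) _) (hnorm a ha)
  -- rewrite with the product formula
  rw [phi_pow hφe hde hB0 hBs] at key1 key2
  set t := φ (j + a') x with htdef
  have hteq : φ (j + s + a) x = t := by rw [hsum]
  rw [hteq] at key2
  set Q := ∏ l ∈ Finset.Ioc j (j + s), w l with hQdef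
  set P2 := ∏ l ∈ Finset.Ioc (j + s) (j + s + a), w l with hP2def
  have hsplit : (∏ l ∈ Finset.Ioc j (j + a'), w l) = Q * P2 := by
    rw [hQdef, hP2def, hsum]
    exact (Finset.prod_Ioc_consecutive w (by omega : j ≤ j + s)
      (by omega : j + s ≤ j + a')).symm
  rw [hsplit] at key1
  -- now key1 : 1 - ε ≤ ‖Q * P2 * t‖, key2 : ‖P2 * t‖ < ε
  have hkey1' : 1 - ε ≤ ‖Q‖ * ‖P2 * t‖ := by
    have : ‖Q * P2 * t‖ = ‖Q‖ * ‖P2 * t‖ := by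
      rw [mul_assoc, norm_mul]
    linarith [key1, this.symm.le]
  have hQnorm : ‖Q‖ = ∏ l ∈ Finset.Ioc j (j + s), ‖w l‖ := by
    rw [hQdef]
    exact norm_prod _ _
  rw [← hQnorm]
  -- arithmetic
  by_contra hcon
  push_neg at hcon
  have h5 : ‖Q‖ * ‖P2 * t‖ ≤ M * ‖P2 * t‖ :=
    mul_le_mul_of_nonneg_right hcon (norm_nonneg _)
  have h6 : M * ‖P2 * t‖ < M * ε := by
    apply mul_lt_mul_of_pos_left _ hM
    exact key2
  have h7 : ε * (M + 2) = 1 := by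
    rw [hεdef]; field_simp
  nlinarith
lemma Gset_mem (hφe : ∀ d k : ℕ, φ d (e k) = if k = d then 1 else 0)
    (hφn : ∀ (d : ℕ) (z : X), ‖φ d z‖ ≤ ‖z‖)
    (hde : Dense ((Submodule.span ℂ (Set.range e) : Submodule ℂ X) : Set X))
    (hB0 : B (e 0) = 0) (hBs : ∀ n, B (e (n + 1)) = w (n + 1) • e n)
    (hP : SatisfiesP (fun n (x : X) => (B ^ n) x) upperBD)
    {q : Ultrafilter ℕ} (hq : IsEssentialIdempotent q)
    (M : ℝ) (hM : 0 < M) (κ : ℕ) (hκ : 1 ≤ κ) (j : ℕ) :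
    {n : ℕ | M < ∏ l ∈ Finset.Ioc j (j + κ * n), ‖w l‖} ∈ q := by
  by_contra hcon
  have hGc : {n : ℕ | M < ∏ l ∈ Finset.Ioc j (j + κ * n), ‖w l‖}ᶜ ∈ q :=
    (Ultrafilter.compl_mem_iff_notMem).2 hcon
  obtain ⟨D, hD, hDprop⟩ := good_D hφe hφn hde hB0 hBs hP M hM j
  set L := ⌈4 / upperBanachDensity D⌉₊ + 1 with hLdef
  have hL : 4 / upperBanachDensity D < (L : ℝ) := by
    calc 4 / upperBanachDensity D ≤ (⌈4 / upperBanachDensity D⌉₊ : ℝ) := Nat.le_ceil _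
    _ < (L : ℝ) := by rw [hLdef]; exact_mod_cast Nat.lt_succ_self _
  have hone : {n : ℕ | 1 ≤ n} ∈ q := tail_mem_of_essential hq 1
  obtain ⟨σ, hσ⟩ := galvin_chain hq.1 hone hGc L
  have hcmono : ∀ i i', i < i' → i' < L → κ * σ i < κ * σ i' := by
    intro i i' h1 h2
    have := (hσ i i' h1 (le_of_lt h2)).1
    exact mul_lt_mul_of_pos_left this (by omega : 0 < κ)
  obtain ⟨i, i', m, h1, h2, hm1, hm2⟩ :=
    pigeonhole_translates D hD L hL (fun i => κ * σ i) hcmono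
  have hσp := hσ i i' h1 (le_of_lt h2)
  obtain ⟨t, ht⟩ : ∃ t, σ i' = σ i + t := ⟨σ i' - σ i, by omega⟩
  have e1 : κ * σ i' = κ * σ i + κ * t := by rw [ht, Nat.mul_add]
  have e2 : σ i' - σ i = t := by omega
  have halt : m + κ * σ i < m + κ * σ i' := by
    have := hcmono i i' h1 h2
    omega
  have hbig := hDprop (m + κ * σ i) (m + κ * σ i') hm1 hm2 halt
  have hdiff : (m + κ * σ i') - (m + κ * σ i) = κ * t := by omega
  rw [hdiff] at hbig
  have : t ∈ {n : ℕ | M < ∏ l ∈ Finset.Ioc j (j + κ * n), ‖w l‖} := hbig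
  have hc := hσp.2
  rw [e2] at hc
  exact hc this
lemma dsp_apply (B : X →L[ℂ] X) (r : ℕ) :
    ∀ (n : ℕ) (x : Fin r → X) (i : Fin r),
      ((directSumPow B r ^ n) x) i = (B ^ ((i.1 + 1) * n)) (x i) := by
  intro n
  induction n with
  | zero =>
    intro x i
    simp [pow_zero, ContinuousLinearMap.one_apply]
  | succ n ih =>
    intro x i
    have h1 : (directSumPow B r ^ (n + 1)) x = (directSumPow B r ^ n) (directSumPow B r x) := by
      rw [pow_succ, ContinuousLinearMap.mul_apply]
    rw [h1, ih]
    have h2 : (directSumPow B r x) i = (B ^ (i.1 + 1)) (x i) := by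
      simp [directSumPow, ContinuousLinearMap.proj_apply]
    rw [h2, ← ContinuousLinearMap.mul_apply, ← pow_add]
    congr 1
lemma abstract_main (hφe : ∀ d k : ℕ, φ d (e k) = if k = d then 1 else 0)
    (hφn : ∀ (d : ℕ) (z : X), ‖φ d z‖ ≤ ‖z‖)
    (hde : Dense ((Submodule.span ℂ (Set.range e) : Submodule ℂ X) : Set X))
    (hen : ∀ d, ‖e d‖ = 1) (hw0 : ∀ n, w n ≠ 0)
    (hB0 : B (e 0) = 0) (hBs : ∀ n, B (e (n + 1)) = w (n + 1) • e n)
    (hP : SatisfiesP (fun n (x : X) => (B ^ n) x) upperBD)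
    (r : ℕ) : FOperator InDstar (directSumPow B r) := by
  intro U V hU hV hUne hVne
  obtain ⟨u, hu⟩ := hUne
  obtain ⟨v, hv⟩ := hVne
  obtain ⟨εU, hεU, hUb⟩ := Metric.isOpen_iff.mp hU u hu
  obtain ⟨εV, hεV, hVb⟩ := Metric.isOpen_iff.mp hV v hv
  set ε := min εU εV with hεdef
  have hε : 0 < ε := lt_min hεU hεV
  have happrox : ∀ y : X, ∃ c : ℕ →₀ ℂ, ‖y - c.sum (fun d a => a • e d)‖ < ε / 4 := by
    intro y
    have hy : y ∈ closure ((Submodule.span ℂ (Set.range e) : Submodule ℂ X) : Set X) :=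
      hde y
    rw [Metric.mem_closure_iff] at hy
    obtain ⟨z, hz, hdist⟩ := hy (ε / 4) (by positivity)
    rw [SetLike.mem_coe, Finsupp.mem_span_range_iff_exists_finsupp] at hz
    obtain ⟨c, hc⟩ := hz
    refine ⟨c, ?_⟩
    rw [hc, ← dist_eq_norm]
    exact hdist
  choose cu hcu using fun i : Fin r => happrox (u i)
  choose cv hcv using fun i : Fin r => happrox (v i)
  set m := Finset.univ.sup
    (fun i : Fin r => max ((cu i).support.sup id) ((cv i).support.sup id)) with hmdef
  have hsupp_u : ∀ i : Fin r, ∀ d ∈ (cu i).support, d ≤ m := by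
    intro i d hd
    calc d = id d := rfl
    _ ≤ (cu i).support.sup id := Finset.le_sup hd
    _ ≤ max ((cu i).support.sup id) ((cv i).support.sup id) := le_max_left _ _
    _ ≤ m := Finset.le_sup (f := fun i : Fin r =>
        max ((cu i).support.sup id) ((cv i).support.sup id)) (Finset.mem_univ i)
  have hsupp_v : ∀ i : Fin r, ∀ d ∈ (cv i).support, d ≤ m := by
    intro i d hd
    calc d = id d := rfl
    _ ≤ (cv i).support.sup id := Finset.le_sup hd
    _ ≤ max ((cu i).support.sup id) ((cv i).support.sup id) := le_max_right _ _
    _ ≤ m := Finset.le_sup (f := fun i : Fin r =>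
        max ((cu i).support.sup id) ((cv i).support.sup id)) (Finset.mem_univ i)
  set Sβ := ∑ i : Fin r, ∑ d ∈ Finset.range (m + 1), ‖cv i d‖ with hSβdef
  have hSβ0 : 0 ≤ Sβ := by positivity
  set M := 1 + (2 / ε) * (Sβ + 1) with hMdef
  have hM : 0 < M := by positivity
  intro q hq
  have htail : {n : ℕ | m + 1 ≤ n} ∈ q := tail_mem_of_essential hq (m + 1)
  have hW : ({n : ℕ | m + 1 ≤ n} ∩
      ⋂ κ ∈ Finset.Icc 1 r, ⋂ j ∈ Finset.range (m + 1),
        {n : ℕ | M < ∏ l ∈ Finset.Ioc j (j + κ * n), ‖w l‖}) ∈ q := by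
    refine Filter.inter_mem htail ?_
    refine (Filter.biInter_finset_mem _).mpr ?_
    intro κ hκ
    refine (Filter.biInter_finset_mem _).mpr ?_
    intro j hj
    have hκ1 : 1 ≤ κ := (Finset.mem_Icc.mp hκ).1
    exact Gset_mem hφe hφn hde hB0 hBs hP hq M hM κ hκ1 j
  refine Filter.mem_of_superset hW ?_
  intro n hn
  obtain ⟨hn1, hn2⟩ := hn
  have hn1' : m + 1 ≤ n := hn1
  have hbig : ∀ i : Fin r, ∀ d, d ≤ m →
      M < ∏ l ∈ Finset.Ioc d (d + (i.1 + 1) * n), ‖w l‖ := by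
    intro i d hd
    have h1 := Set.mem_iInter₂.mp hn2 (i.1 + 1)
      (Finset.mem_Icc.mpr ⟨by omega, by omega⟩)
    have h2 := Set.mem_iInter₂.mp h1 d (Finset.mem_range.mpr (by omega))
    exact h2
  have hprod_ne : ∀ i : Fin r, ∀ d : ℕ,
      (∏ l ∈ Finset.Ioc d (d + (i.1 + 1) * n), w l) ≠ 0 :=
    fun i d => Finset.prod_ne_zero_iff.mpr (fun l _ => hw0 l)
  have hprod_pos : ∀ i : Fin r, ∀ d, d ≤ m →
      M ≤ ‖∏ l ∈ Finset.Ioc d (d + (i.1 + 1) * n), w l‖ := by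
    intro i d hd
    rw [norm_prod]
    exact le_of_lt (hbig i d hd)
  -- the witness
  set z : Fin r → X := fun i => ∑ d ∈ Finset.range (m + 1),
    (cv i d / ∏ l ∈ Finset.Ioc d (d + (i.1 + 1) * n), w l) • e (d + (i.1 + 1) * n) with hzdef
  set x : Fin r → X := fun i => (cu i).sum (fun d a => a • e d) + z i with hxdef
  have hznorm : ∀ i : Fin r, ‖z i‖ < ε / 2 := by
    intro i
    have h1 : ‖z i‖ ≤ ∑ d ∈ Finset.range (m + 1),
        ‖cv i d‖ / ‖∏ l ∈ Finset.Ioc d (d + (i.1 + 1) * n), w l‖ := by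
      refine le_trans (norm_sum_le _ _) (Finset.sum_le_sum ?_)
      intro d hd
      rw [norm_smul, hen, mul_one, norm_div]
    have h2 : ∀ d ∈ Finset.range (m + 1),
        ‖cv i d‖ / ‖∏ l ∈ Finset.Ioc d (d + (i.1 + 1) * n), w l‖ ≤ ‖cv i d‖ / M := by
      intro d hd
      exact div_le_div_of_nonneg_left (norm_nonneg _) hM
        (hprod_pos i d (by simpa using Nat.lt_succ_iff.mp (Finset.mem_range.mp hd)))
    have h3 : ∑ d ∈ Finset.range (m + 1), ‖cv i d‖ / M
        = (∑ d ∈ Finset.range (m + 1), ‖cv i d‖) / M := by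
      rw [Finset.sum_div]
    have h4 : (∑ d ∈ Finset.range (m + 1), ‖cv i d‖) ≤ Sβ := by
      rw [hSβdef]
      exact Finset.single_le_sum (f := fun i : Fin r =>
        ∑ d ∈ Finset.range (m + 1), ‖cv i d‖) (fun _ _ => by positivity)
        (Finset.mem_univ i)
    have h5 : Sβ / M < ε / 2 := by
      rw [div_lt_iff₀ hM]
      have h6 : ε / 2 * ((2 / ε) * (Sβ + 1)) = Sβ + 1 := by
        field_simp
      nlinarith
    calc ‖z i‖ ≤ ∑ d ∈ Finset.range (m + 1),
          ‖cv i d‖ / ‖∏ l ∈ Finset.Ioc d (d + (i.1 + 1) * n), w l‖ := h1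
    _ ≤ ∑ d ∈ Finset.range (m + 1), ‖cv i d‖ / M := Finset.sum_le_sum h2
    _ = (∑ d ∈ Finset.range (m + 1), ‖cv i d‖) / M := h3
    _ ≤ Sβ / M := by gcongr
    _ < ε / 2 := h5
  refine ⟨x, ?_, ?_⟩
  · -- x ∈ U
    apply hUb
    rw [Metric.mem_ball, dist_eq_norm]
    have h7 : ∀ i : Fin r, ‖(x - u) i‖ < εU := by
      intro i
      have h8 : (x - u) i = ((cu i).sum (fun d a => a • e d) - u i) + z i := by
        simp only [hxdef, Pi.sub_apply]
        abel
      rw [h8]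
      have h9 : ‖(cu i).sum (fun d a => a • e d) - u i‖ < ε / 4 := by
        rw [norm_sub_rev]
        exact hcu i
      calc ‖((cu i).sum (fun d a => a • e d) - u i) + z i‖
          ≤ ‖(cu i).sum (fun d a => a • e d) - u i‖ + ‖z i‖ := norm_add_le _ _
      _ < ε / 4 + ε / 2 := by linarith [hznorm i]
      _ ≤ ε := by linarith
      _ ≤ εU := min_le_left _ _
    exact (pi_norm_lt_iff hεU).mpr h7
  · apply hVb
    rw [Metric.mem_ball, dist_eq_norm]
    have hTn : ∀ i : Fin r, ((directSumPow B r ^ n) x) i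
        = (cv i).sum (fun d a => a • e d) := by
      intro i
      rw [dsp_apply]
      have hxu : x i = (cu i).sum (fun d a => a • e d) + z i := rfl
      rw [hxu, map_add]
      have hkill : (B ^ ((i.1 + 1) * n)) ((cu i).sum (fun d a => a • e d)) = 0 := by
        rw [Finsupp.sum, map_sum]
        apply Finset.sum_eq_zero
        intro d hd
        have hd1 : d ≤ m := hsupp_u i d hd
        have hd2 : n ≤ (i.1 + 1) * n := Nat.le_mul_of_pos_left n (by omega)
        rw [map_smul, pow_apply_basis_lt hB0 hBs _ d (by omega), smul_zero]
      have himg : (B ^ ((i.1 + 1) * n)) (z i)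
          = ∑ d ∈ Finset.range (m + 1), cv i d • e d := by
        show (B ^ ((i.1 + 1) * n)) (∑ d ∈ Finset.range (m + 1),
          (cv i d / ∏ l ∈ Finset.Ioc d (d + (i.1 + 1) * n), w l) • e (d + (i.1 + 1) * n))
          = ∑ d ∈ Finset.range (m + 1), cv i d • e d
        rw [map_sum]
        apply Finset.sum_congr rfl
        intro d hd
        rw [map_smul, pow_apply_basis hBs ((i.1 + 1) * n) d, smul_smul,
          div_mul_cancel₀ _ (hprod_ne i d)]
      rw [hkill, himg, zero_add]
      have hsub : (cv i).support ⊆ Finset.range (m + 1) := by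
        intro d hd
        exact Finset.mem_range.mpr (by have := hsupp_v i d hd; omega)
      exact (Finsupp.sum_of_support_subset (cv i) hsub (fun d a => a • e d)
        (fun d _ => zero_smul ℂ (e d))).symm
    have h7 : ∀ i : Fin r, ‖((directSumPow B r ^ n) x - v) i‖ < εV := by
      intro i
      rw [Pi.sub_apply, hTn i, norm_sub_rev]
      calc ‖v i - (cv i).sum (fun d a => a • e d)‖ < ε / 4 := hcv i
      _ ≤ εV := le_trans (by linarith) (min_le_right εU εV)
    exact (pi_norm_lt_iff hεV).mpr h7
end Abstract

section C0Inst

local notation "𝒞₀" => ZeroAtInftyContinuousMap ℕ ℂ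

lemma c0_apply_le_norm (f : 𝒞₀) (d : ℕ) : ‖f d‖ ≤ ‖f‖ := by
  have h := f.toBCF.norm_coe_le_norm d
  rwa [ZeroAtInftyContinuousMap.norm_toBCF_eq_norm] at h

noncomputable def c0Eval (d : ℕ) : 𝒞₀ →L[ℂ] ℂ :=
  LinearMap.mkContinuous
    { toFun := fun f => f d
      map_add' := fun f g => rfl
      map_smul' := fun c f => rfl } 1
    (fun f => by simpa using c0_apply_le_norm f d)

lemma c0Eval_apply (d : ℕ) (f : 𝒞₀) : c0Eval d f = f d := rfl

lemma c0Single_apply (k d : ℕ) : (c0Single k : 𝒞₀) d = if d = k then 1 else 0 := rfl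

lemma c0_hφe : ∀ d k : ℕ, c0Eval d (c0Single k) = if k = d then 1 else 0 := by
  intro d k
  rw [c0Eval_apply, c0Single_apply]
  by_cases h : d = k
  · subst h; simp
  · rw [if_neg h, if_neg (Ne.symm h)]

lemma c0_hen (d : ℕ) : ‖(c0Single d : 𝒞₀)‖ = 1 := by
  apply le_antisymm
  · rw [← ZeroAtInftyContinuousMap.norm_toBCF_eq_norm]
    apply (BoundedContinuousFunction.norm_le zero_le_one).mpr
    intro x
    show ‖(c0Single d : 𝒞₀) x‖ ≤ 1
    rw [c0Single_apply]
    split_ifs <;> simp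
  · have h := c0_apply_le_norm (c0Single d) d
    rw [c0Single_apply, if_pos rfl] at h
    simpa using h
lemma c0_dense :
    Dense ((Submodule.span ℂ (Set.range (c0Single : ℕ → 𝒞₀)) : Submodule ℂ 𝒞₀) : Set 𝒞₀) := by
  intro f
  rw [Metric.mem_closure_iff]
  intro ε hε
  have h := f.zero_at_infty'
  rw [Filter.cocompact_eq_cofinite] at h
  have h2 : ∀ᶠ x in Filter.cofinite, ‖f x‖ < ε / 2 := by
    have := Metric.tendsto_nhds.mp h (ε / 2) (by positivity)
    simpa [dist_zero_right] using this
  rw [Filter.eventually_cofinite] at h2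
  set K := {x : ℕ | ¬ ‖f x‖ < ε / 2} with hKdef
  have hK : K.Finite := h2
  set g : 𝒞₀ := ∑ k ∈ hK.toFinset, f k • c0Single k with hgdef
  have hgmem : g ∈ (Submodule.span ℂ (Set.range (c0Single : ℕ → 𝒞₀)) : Submodule ℂ 𝒞₀) := by
    apply Submodule.sum_mem
    intro k _
    exact Submodule.smul_mem _ _ (Submodule.subset_span ⟨k, rfl⟩)
  refine ⟨g, hgmem, ?_⟩
  have hgx : ∀ x : ℕ, g x = if x ∈ hK.toFinset then f x else 0 := by
    intro x
    have : g x = ∑ k ∈ hK.toFinset, (f k • (c0Single k : 𝒞₀)) x := by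
      rw [hgdef]
      exact map_sum (c0Eval x) _ _
    rw [this]
    have : ∀ k ∈ hK.toFinset, (f k • (c0Single k : 𝒞₀)) x
        = if x = k then f k else 0 := by
      intro k _
      show f k * (if x = k then 1 else 0) = if x = k then f k else 0
      split_ifs <;> simp
    rw [Finset.sum_congr rfl this, Finset.sum_ite_eq hK.toFinset x f]
  have hdist : dist f g ≤ ε / 2 := by
    rw [dist_eq_norm, ← ZeroAtInftyContinuousMap.norm_toBCF_eq_norm]
    apply (BoundedContinuousFunction.norm_le (by positivity)).mpr
    intro x
    show ‖f x - g x‖ ≤ ε / 2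
    rw [hgx x]
    by_cases hx : x ∈ hK.toFinset
    · rw [if_pos hx]
      simpa using by positivity
    · rw [if_neg hx]
      have : ‖f x‖ < ε / 2 := by
        by_contra hcon
        exact hx (hK.mem_toFinset.mpr (by rw [hKdef]; exact hcon))
      simpa using le_of_lt this
  exact lt_of_le_of_lt hdist (by linarith)

end C0Inst
section LpInst

variable (p : ℝ≥0∞) [Fact (1 ≤ p)]

lemma lp_p_ne_zero : p ≠ 0 := by
  have h : (1 : ℝ≥0∞) ≤ p := Fact.out
  intro hc
  rw [hc] at h
  simp at h

lemma lp_apply_le_norm (f : lp (fun _ : ℕ => ℂ) p) (d : ℕ) : ‖f d‖ ≤ ‖f‖ :=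
  lp.norm_apply_le_norm (lp_p_ne_zero p) f d

noncomputable def lpEval (d : ℕ) : lp (fun _ : ℕ => ℂ) p →L[ℂ] ℂ :=
  LinearMap.mkContinuous
    { toFun := fun f => f d
      map_add' := fun f g => congrFun (lp.coeFn_add f g) d
      map_smul' := fun c f => congrFun (lp.coeFn_smul c f) d } 1
    (fun f => by simpa using lp_apply_le_norm p f d)

lemma lpEval_apply (d : ℕ) (f : lp (fun _ : ℕ => ℂ) p) : lpEval p d f = f d := rfl

lemma lp_hφe (d k : ℕ) :
    lpEval p d (lp.single p k (1 : ℂ)) = if k = d then 1 else 0 := by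
  rw [lpEval_apply]
  by_cases h : d = k
  · subst h
    rw [lp.single_apply_self (E := fun _ : ℕ => ℂ) p d (1 : ℂ), if_pos rfl]
  · rw [lp.single_apply_ne (E := fun _ : ℕ => ℂ) p k (1 : ℂ) h, if_neg (Ne.symm h)]

lemma lp_hen (hp : p ≠ ∞) (d : ℕ) :
    ‖(lp.single p d (1 : ℂ) : lp (fun _ : ℕ => ℂ) p)‖ = 1 := by
  have hptr : 0 < p.toReal := ENNReal.toReal_pos (lp_p_ne_zero p) hp
  have := lp.norm_single (E := fun _ : ℕ => ℂ) (p := p) (pos_iff_ne_zero.mpr (lp_p_ne_zero p)) d (1 : ℂ)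
  simpa using this

lemma lp_dense (hp : p ≠ ∞) :
    Dense ((Submodule.span ℂ (Set.range (fun n : ℕ => lp.single p n (1 : ℂ))) :
      Submodule ℂ (lp (fun _ : ℕ => ℂ) p)) : Set (lp (fun _ : ℕ => ℂ) p)) := by
  intro f
  have h : Tendsto (fun s : Finset ℕ => ∑ i ∈ s, lp.single p i (f i)) atTop (𝓝 f) :=
    lp.hasSum_single hp f
  apply mem_closure_of_tendsto h
  filter_upwards with s
  apply Submodule.sum_mem
  intro i _
  have h3 : (lp.single p i ((f i : ℂ) • (1 : ℂ)) : lp (fun _ : ℕ => ℂ) p)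
      = (f i : ℂ) • (lp.single p i (1 : ℂ) : lp (fun _ : ℕ => ℂ) p) :=
    lp.single_smul (E := fun _ : ℕ => ℂ) p i (f i) (1 : ℂ)
  have h4 : (f i : ℂ) • (1 : ℂ) = f i := by simp
  rw [h4] at h3
  rw [h3]
  exact Submodule.smul_mem _ _ (Submodule.subset_span ⟨i, rfl⟩)

end LpInst
theorem stmt8 :
    (∀ w : ℕ → ℂ, (∀ n, w n ≠ 0) → BddWeight w →
      ∀ B : ZeroAtInftyContinuousMap ℕ ℂ →L[ℂ] ZeroAtInftyContinuousMap ℕ ℂ,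
        IsUnilateralWeightedShift c0Single w B →
        SatisfiesP (fun n x => (B ^ n) x) upperBD →
        ∀ r : ℕ, FOperator InDstar (directSumPow B r)) ∧
    ∀ (p : ℝ≥0∞) [Fact (1 ≤ p)], p ≠ ∞ →
      ∀ w : ℕ → ℂ, (∀ n, w n ≠ 0) → BddWeight w →
      ∀ B : lp (fun _ : ℕ => ℂ) p →L[ℂ] lp (fun _ : ℕ => ℂ) p,
        IsUnilateralWeightedShift (fun n => lp.single p n 1) w B →
        SatisfiesP (fun n x => (B ^ n) x) upperBD →
        ∀ r : ℕ, FOperator InDstar (directSumPow B r) := by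
  constructor
  · intro w hw0 _ B hshift hP r
    exact abstract_main (e := c0Single) (φ := c0Eval) c0_hφe
      (fun d z => c0_apply_le_norm z d) c0_dense c0_hen hw0 hshift.1 hshift.2 hP r
  · intro p hfact hp w hw0 _ B hshift hP r
    exact abstract_main (e := fun n => lp.single p n 1) (φ := lpEval p)
      (lp_hφe p) (fun d z => lp_apply_le_norm p z d) (lp_dense p hp)
      (lp_hen p hp) hw0 hshift.1 hshift.2 hP r
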